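/- Let T be a table with suppressed graph H. If every connected component of H is strongly connected, then UK(T) = BK(T). -/

import Mathlib

/-- A two-dimensional table: values, lower/upper bounds, and a set of suppressed cells. -/
structure Table (R C : Type*) where
  val : R × C → ℝ
  lo : R × C → ℝ
  hi : R × C → ℝ
  sup : Set (R × C)
  lo_le : ∀ e, lo e ≤ val e
  le_hi : ∀ e, val e ≤ hi e
  lo_lt_hi : ∀ e, lo e < hi e

variable {R C : Type*}

/-- A bounded feasible assignment of a table. -/
def BFA [Fintype R] [Fintype C] (T : Table R C) (x : R × C → ℝ) : Prop :=
  (∀ e, e ∉ T.sup → x e = T.val e) ∧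
  (∀ e ∈ T.sup, T.lo e ≤ x e ∧ x e ≤ T.hi e) ∧
  (∀ i : R, ∑ j, x (i, j) = ∑ j, T.val (i, j)) ∧
  (∀ j : C, ∑ i, x (i, j) = ∑ i, T.val (i, j))

/-- One traversable step in the mixed graph with edge set `S`: the edge of a cell `e`
may be traversed from its row endpoint to its column endpoint iff `val e < hi e`,
and from its column endpoint to its row endpoint iff `lo e < val e`. -/
def MStep (T : Table R C) (S : Set (R × C)) (v w : R ⊕ C) : Prop :=
  ∃ e ∈ S, (T.val e < T.hi e ∧ v = Sum.inl e.1 ∧ w = Sum.inr e.2) ∨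
           (T.lo e < T.val e ∧ v = Sum.inr e.2 ∧ w = Sum.inl e.1)

/-- Reachability along traversable paths in the mixed graph with edge set `S`. -/
def MReach (T : Table R C) (S : Set (R × C)) : (R ⊕ C) → (R ⊕ C) → Prop :=
  Relation.ReflTransGen (MStep T S)

/-- Mutual reachability in the mixed graph with edge set `S`. -/
def MutReach (T : Table R C) (S : Set (R × C)) (v w : R ⊕ C) : Prop :=
  MReach T S v w ∧ MReach T S w v

/-- `D` is a strongly connected component of the mixed graph with edge set `S`:
an equivalence class of mutual reachability. -/
def IsSCC (T : Table R C) (S : Set (R × C)) (D : Set (R ⊕ C)) : Prop :=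
  ∃ v, D = {w | MutReach T S v w}

/-- Direction-blind adjacency via an edge in `S`. -/
def Adj (S : Set (R × C)) (v w : R ⊕ C) : Prop :=
  ∃ e ∈ S, (v = Sum.inl e.1 ∧ w = Sum.inr e.2) ∨ (v = Sum.inr e.2 ∧ w = Sum.inl e.1)

/-- Direction-blind connectivity via edges in `S`. -/
def Conn (S : Set (R × C)) : (R ⊕ C) → (R ⊕ C) → Prop :=
  Relation.ReflTransGen (Adj S)

/-- `D` is a connected component of the (direction-blind) graph with edge set `S`. -/
def IsCC (S : Set (R × C)) (D : Set (R ⊕ C)) : Prop :=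
  ∃ v, D = {w | Conn S v w}

/-- The edges of `S` with both endpoints in the vertex set `D`. -/
def EdgesIn (S : Set (R × C)) (D : Set (R ⊕ C)) : Set (R × C) :=
  {e | e ∈ S ∧ Sum.inl e.1 ∈ D ∧ Sum.inr e.2 ∈ D}

/-- All vertices of `D` are joined by direction-blind paths using edges in `S`. -/
def ConnectedOn (S : Set (R × C)) (D : Set (R ⊕ C)) : Prop :=
  ∀ v ∈ D, ∀ w ∈ D, Conn S v w

/-- An unbounded feasible assignment of a table. -/
def UFA [Fintype R] [Fintype C] (T : Table R C) (x : R × C → ℝ) : Prop :=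
  (∀ e, e ∉ T.sup → x e = T.val e) ∧
  (∀ i : R, ∑ j, x (i, j) = ∑ j, T.val (i, j)) ∧
  (∀ j : C, ∑ i, x (i, j) = ∑ i, T.val (i, j))

/-- The unbounded kernel of a table. -/
def UK [Fintype R] [Fintype C] (T : Table R C) : Submodule ℝ (R × C → ℝ) :=
  Submodule.span ℝ {v | ∃ x y, UFA T x ∧ UFA T y ∧ v = x - y}

/-- The bounded kernel of a table. -/
def BK [Fintype R] [Fintype C] (T : Table R C) : Submodule ℝ (R × C → ℝ) :=
  Submodule.span ℝ {v | ∃ x y, BFA T x ∧ BFA T y ∧ v = x - y}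

section rtauxiliary2
variable {R C : Type*}

lemma bfa_val [Fintype R] [Fintype C] (T : Table R C) : BFA T T.val :=
  ⟨fun _ _ => rfl, fun e _ => ⟨T.lo_le e, T.le_hi e⟩, fun _ => rfl, fun _ => rfl⟩

lemma mem_BK_of_signs [Fintype R] [Fintype C] [Nonempty R] [Nonempty C]
    (T : Table R C) (z : R × C → ℝ)
    (hsup : ∀ e, z e ≠ 0 → e ∈ T.sup)
    (hpos : ∀ e, 0 < z e → T.val e < T.hi e)
    (hneg : ∀ e, z e < 0 → T.lo e < T.val e)
    (hrow : ∀ i : R, ∑ j, z (i, j) = 0)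
    (hcol : ∀ j : C, ∑ i, z (i, j) = 0) :
    z ∈ BK T := by
  classical
  set εf : R × C → ℝ := fun e =>
    if 0 < z e then (T.hi e - T.val e) / z e
    else if z e < 0 then (T.lo e - T.val e) / z e else 1 with hεf
  have hεfpos : ∀ e, 0 < εf e := by
    intro e
    by_cases h1 : 0 < z e
    · simp only [hεf, if_pos h1]
      exact div_pos (sub_pos.2 (hpos e h1)) h1
    · by_cases h2 : z e < 0
      · simp only [hεf, if_neg h1, if_pos h2]
        exact div_pos_of_neg_of_neg (sub_neg.2 (hneg e h2)) h2
      · simp [hεf, h1, h2]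
  set ε := Finset.univ.inf' Finset.univ_nonempty εf with hε
  have hεpos : 0 < ε := (Finset.lt_inf'_iff _).2 fun e _ => hεfpos e
  have hεle : ∀ e : R × C, ε ≤ εf e := fun e => Finset.inf'_le _ (Finset.mem_univ e)
  have hb : BFA T (fun e => T.val e + ε * z e) := by
    refine ⟨fun e he => ?_, fun e _ => ⟨?_, ?_⟩, fun i => ?_, fun j => ?_⟩
    · have hz : z e = 0 := by by_contra hz; exact he (hsup e hz)
      simp [hz]
    · -- lower bound
      rcases lt_trichotomy (z e) 0 with h1 | h1 | h1
      · have h2 : εf e = (T.lo e - T.val e) / z e := by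
          simp only [hεf, if_neg (not_lt.2 h1.le), if_pos h1]
        have h3 : εf e * z e = T.lo e - T.val e := by
          rw [h2, div_mul_cancel₀ _ h1.ne]
        have h4 := mul_le_mul_of_nonpos_right (hεle e) h1.le
        simp only []
        nlinarith
      · simp [h1, T.lo_le e]
      · have : 0 ≤ ε * z e := le_of_lt (mul_pos hεpos h1)
        have := T.lo_le e
        simp only []
        nlinarith
    · -- upper bound
      rcases lt_trichotomy (z e) 0 with h1 | h1 | h1
      · have : ε * z e ≤ 0 := le_of_lt (mul_neg_of_pos_of_neg hεpos h1)
        have := T.le_hi e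
        simp only []
        nlinarith
      · simp [h1, T.le_hi e]
      · have h2 : εf e = (T.hi e - T.val e) / z e := by
          simp only [hεf, if_pos h1]
        have h3 : εf e * z e = T.hi e - T.val e := by
          rw [h2, div_mul_cancel₀ _ h1.ne']
        have h4 := mul_le_mul_of_nonneg_right (hεle e) h1.le
        simp only []
        nlinarith
    · simp only []
      rw [Finset.sum_add_distrib, ← Finset.mul_sum, hrow i, mul_zero, add_zero]
    · simp only []
      rw [Finset.sum_add_distrib, ← Finset.mul_sum, hcol j, mul_zero, add_zero]
  have hmem : ε • z ∈ BK T := by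
    apply Submodule.subset_span
    refine ⟨(fun e => T.val e + ε * z e), T.val, hb, bfa_val T, ?_⟩
    funext e
    simp [mul_comm]
  have : z = ε⁻¹ • (ε • z) := by
    rw [smul_smul, inv_mul_cancel₀ hεpos.ne', one_smul]
  rw [this]
  exact Submodule.smul_mem _ _ hmem

end rtauxiliary2

section rtauxiliary
variable {R C : Type*}

section walks

variable [DecidableEq R] [DecidableEq C]

inductive Walk (T : Table R C) : (R ⊕ C) → (R ⊕ C) → (R × C → ℝ) → Prop
  | nil (v) : Walk T v v 0
  | fwd {v : R ⊕ C} {c : R × C → ℝ} (e : R × C) (he : e ∈ T.sup) (hh : T.val e < T.hi e)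
      (hw : Walk T v (Sum.inl e.1) c) : Walk T v (Sum.inr e.2) (c + Pi.single e 1)
  | bwd {v : R ⊕ C} {c : R × C → ℝ} (e : R × C) (he : e ∈ T.sup) (hl : T.lo e < T.val e)
      (hw : Walk T v (Sum.inr e.2) c) : Walk T v (Sum.inl e.1) (c - Pi.single e 1)

lemma exists_walk_of_mreach {T : Table R C} {v w : R ⊕ C}
    (h : MReach T T.sup v w) : ∃ c, Walk T v w c := by
  induction h with
  | refl => exact ⟨0, Walk.nil v⟩
  | tail hab hbc ih =>
    obtain ⟨c, hc⟩ := ih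
    obtain ⟨e, he, hcase⟩ := hbc
    rcases hcase with ⟨hh, rfl, rfl⟩ | ⟨hl, rfl, rfl⟩
    · exact ⟨_, Walk.fwd e he hh hc⟩
    · exact ⟨_, Walk.bwd e he hl hc⟩

lemma Walk.append {T : Table R C} {u v w : R ⊕ C} {c d : R × C → ℝ}
    (h1 : Walk T v u c) (h2 : Walk T u w d) : Walk T v w (c + d) := by
  induction h2 with
  | nil => simpa using h1
  | fwd e he hh hw ih =>
    rw [← add_assoc]; exact Walk.fwd e he hh ih
  | bwd e he hl hw ih =>
    rw [← add_sub_assoc]; exact Walk.bwd e he hl ih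

lemma walk_signs {T : Table R C} {v w : R ⊕ C} {c : R × C → ℝ} (h : Walk T v w c) :
    ∀ e, (c e ≠ 0 → e ∈ T.sup) ∧ (0 < c e → T.val e < T.hi e) ∧ (c e < 0 → T.lo e < T.val e) := by
  induction h with
  | nil => intro e; simp
  | fwd e0 he hh hw ih =>
    intro e
    by_cases hne : e = e0
    · subst hne
      simp only [Pi.add_apply, Pi.single_eq_same]
      exact ⟨fun _ => he, fun _ => hh, fun hlt => (ih e).2.2 (by linarith)⟩
    · simp only [Pi.add_apply, Pi.single_eq_of_ne hne, add_zero]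
      exact ih e
  | bwd e0 he hl hw ih =>
    intro e
    by_cases hne : e = e0
    · subst hne
      simp only [Pi.sub_apply, Pi.single_eq_same]
      exact ⟨fun _ => he, fun hgt => (ih e).2.1 (by linarith), fun _ => hl⟩
    · simp only [Pi.sub_apply, Pi.single_eq_of_ne hne, sub_zero]
      exact ih e

lemma sum_single_row [Fintype C] (e : R × C) (i : R) :
    ∑ j, (Pi.single e (1:ℝ) : R × C → ℝ) (i, j) = if i = e.1 then (1:ℝ) else 0 := by
  rcases e with ⟨a, b⟩
  by_cases hi : i = a
  · subst hi
    rw [if_pos rfl]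
    rw [Finset.sum_eq_single b]
    · simp
    · intro j _ hj; exact Pi.single_eq_of_ne (by simp [hj]) 1
    · simp
  · rw [if_neg hi]
    apply Finset.sum_eq_zero
    intro j _
    exact Pi.single_eq_of_ne (by simp [Prod.ext_iff, hi]) 1

lemma sum_single_col [Fintype R] (e : R × C) (j : C) :
    ∑ i, (Pi.single e (1:ℝ) : R × C → ℝ) (i, j) = if j = e.2 then (1:ℝ) else 0 := by
  rcases e with ⟨a, b⟩
  by_cases hj : j = b
  · subst hj
    rw [if_pos rfl]
    rw [Finset.sum_eq_single a]
    · simp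
    · intro i _ hi; exact Pi.single_eq_of_ne (by simp [hi]) 1
    · simp
  · rw [if_neg hj]
    apply Finset.sum_eq_zero
    intro i _
    exact Pi.single_eq_of_ne (by simp [Prod.ext_iff, hj]) 1

lemma walk_row [Fintype C] {T : Table R C} {v w : R ⊕ C} {c : R × C → ℝ} (h : Walk T v w c) :
    ∀ i : R, ∑ j, c (i, j) =
      (if v = Sum.inl i then 1 else 0) - (if w = Sum.inl i then 1 else 0) := by
  induction h with
  | nil => intro i; simp
  | fwd e he hh hw ih =>
    intro i
    simp only [Pi.add_apply, Finset.sum_add_distrib, ih i, sum_single_row]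
    by_cases h1 : v = Sum.inl i <;> by_cases h2 : i = e.1 <;> simp [h1, h2, eq_comm] <;> ring
  | bwd e he hl hw ih =>
    intro i
    simp only [Pi.sub_apply, Finset.sum_sub_distrib, ih i, sum_single_row]
    by_cases h1 : v = Sum.inl i <;> by_cases h2 : i = e.1 <;> simp [h1, h2, eq_comm] <;> ring

lemma walk_col [Fintype R] {T : Table R C} {v w : R ⊕ C} {c : R × C → ℝ} (h : Walk T v w c) :
    ∀ j : C, ∑ i, c (i, j) =
      (if w = Sum.inr j then 1 else 0) - (if v = Sum.inr j then 1 else 0) := by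
  induction h with
  | nil => intro j; simp
  | fwd e he hh hw ih =>
    intro j
    simp only [Pi.add_apply, Finset.sum_add_distrib, ih j, sum_single_col]
    by_cases h1 : v = Sum.inr j <;> by_cases h2 : j = e.2 <;> simp [h1, h2, eq_comm] <;> ring
  | bwd e he hl hw ih =>
    intro j
    simp only [Pi.sub_apply, Finset.sum_sub_distrib, ih j, sum_single_col]
    by_cases h1 : v = Sum.inr j <;> by_cases h2 : j = e.2 <;> simp [h1, h2, eq_comm] <;> ring
end walks


lemma exists_potential [Fintype R] [Fintype C] [Nonempty R] [Nonempty C]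
    [DecidableEq R] [DecidableEq C] (T : Table R C)
    (h : ∀ D : Set (R ⊕ C), IsCC T.sup D → ∀ v ∈ D, ∀ w ∈ D, MutReach T T.sup v w)
    (f : Module.Dual ℝ (R × C → ℝ)) (hf : ∀ y ∈ BK T, f y = 0) :
    ∃ π : (R ⊕ C) → ℝ, ∀ e ∈ T.sup,
      f (Pi.single e 1) = π (Sum.inr e.2) - π (Sum.inl e.1) := by
  classical
  have hmut : ∀ v w : R ⊕ C, Conn T.sup v w → MutReach T T.sup v w := by
    intro v w hc
    exact h {w | Conn T.sup v w} ⟨v, rfl⟩ v Relation.ReflTransGen.refl w hc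
  have hsymm : Symmetric (Conn T.sup) := fun a b hab => (@Relation.ReflTransGen.stdSymm _ _ ⟨(by
    rintro v w ⟨e, he, (⟨h1, h2⟩ | ⟨h1, h2⟩)⟩
    exacts [⟨e, he, Or.inr ⟨h2, h1⟩⟩, ⟨e, he, Or.inl ⟨h2, h1⟩⟩])⟩).symm a b hab
  let s : Setoid (R ⊕ C) := ⟨Conn T.sup,
    ⟨fun _ => Relation.ReflTransGen.refl, fun hab => hsymm hab,
     fun hab hbc => hab.trans hbc⟩⟩
  let rep : (R ⊕ C) → (R ⊕ C) := fun v => (@Quotient.mk _ s v).out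
  have hrep : ∀ v, Conn T.sup (rep v) v := fun v => @Quotient.mk_out _ s v
  have hwalk : ∀ v, ∃ c, Walk T (rep v) v c := fun v =>
    exists_walk_of_mreach (hmut _ _ (hrep v)).1
  choose cvec hcvec using hwalk
  have hclosed : ∀ (v : R ⊕ C) (c : R × C → ℝ), Walk T v v c → f c = 0 := by
    intro v c hw
    apply hf
    refine mem_BK_of_signs T c (fun e he => (walk_signs hw e).1 he)
      (fun e he => (walk_signs hw e).2.1 he) (fun e he => (walk_signs hw e).2.2 he)
      (fun i => ?_) (fun j => ?_)
    · rw [walk_row hw i]; exact sub_self _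
    · rw [walk_col hw j]; exact sub_self _
  refine ⟨fun v => f (cvec v), ?_⟩
  intro e he
  have hconn : Conn T.sup (Sum.inl e.1) (Sum.inr e.2) :=
    Relation.ReflTransGen.single ⟨e, he, Or.inl ⟨rfl, rfl⟩⟩
  have hrepeq : rep (Sum.inl e.1) = rep (Sum.inr e.2) :=
    congrArg Quotient.out (Quotient.sound hconn)
  obtain ⟨d1, hd1⟩ :=
    exists_walk_of_mreach (hmut (rep (Sum.inl e.1)) (Sum.inl e.1) (hrep _)).2
  obtain ⟨d2, hd2⟩ :=
    exists_walk_of_mreach (hmut (rep (Sum.inr e.2)) (Sum.inr e.2) (hrep _)).2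
  have hc1 : Walk T (rep (Sum.inl e.1)) (Sum.inl e.1) (cvec (Sum.inl e.1)) := hcvec _
  have hc2 : Walk T (rep (Sum.inl e.1)) (Sum.inr e.2) (cvec (Sum.inr e.2)) := by
    rw [hrepeq]; exact hcvec _
  rw [← hrepeq] at hd2
  rcases (T.le_hi e).lt_or_eq with hlt | heq
  · have K1 : Walk T (rep (Sum.inl e.1)) (rep (Sum.inl e.1))
        (cvec (Sum.inl e.1) + Pi.single e 1 + d2) :=
      (Walk.fwd e he hlt hc1).append hd2
    have K2 : Walk T (rep (Sum.inl e.1)) (rep (Sum.inl e.1))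
        (cvec (Sum.inr e.2) + d2) := hc2.append hd2
    have h1 := hclosed _ _ K1
    have h2 := hclosed _ _ K2
    simp only [map_add] at h1 h2
    linarith
  · have hlt' : T.lo e < T.val e := by
      have := T.lo_lt_hi e; rwa [← heq] at this
    have K1 : Walk T (rep (Sum.inl e.1)) (rep (Sum.inl e.1))
        (cvec (Sum.inr e.2) - Pi.single e 1 + d1) :=
      (Walk.bwd e he hlt' hc2).append hd1
    have K2 : Walk T (rep (Sum.inl e.1)) (rep (Sum.inl e.1))
        (cvec (Sum.inl e.1) + d1) := hc1.append hd1
    have h1 := hclosed _ _ K1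
    have h2 := hclosed _ _ K2
    simp only [map_add, map_sub] at h1 h2
    linarith

end rtauxiliary


/-- If every connected component of the suppressed graph is strongly connected,
then the unbounded kernel equals the bounded kernel. -/
theorem stmt2 [Fintype R] [Fintype C] [Nonempty R] [Nonempty C]
    (T : Table R C)
    (h : ∀ D : Set (R ⊕ C), IsCC T.sup D → ∀ v ∈ D, ∀ w ∈ D, MutReach T T.sup v w) :
    UK T = BK T := by
  classical
  apply le_antisymm
  · have hsub : {v | ∃ x y, UFA T x ∧ UFA T y ∧ v = x - y} ⊆ ↑(BK T) := by
      rintro z ⟨x, y, hx, hy, rfl⟩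
      have hz0 : ∀ e, e ∉ T.sup → x e - y e = 0 := fun e he => by
        rw [hx.1 e he, hy.1 e he, sub_self]
      have hzr : ∀ i : R, ∑ j, (x - y) (i, j) = 0 := by
        intro i; simp only [Pi.sub_apply]
        rw [Finset.sum_sub_distrib, hx.2.1 i, hy.2.1 i, sub_self]
      have hzc : ∀ j : C, ∑ i, (x - y) (i, j) = 0 := by
        intro j; simp only [Pi.sub_apply]
        rw [Finset.sum_sub_distrib, hx.2.2 j, hy.2.2 j, sub_self]
      rw [SetLike.mem_coe,
        ← Subspace.forall_mem_dualAnnihilator_apply_eq_zero_iff (BK T)]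
      intro f hfann
      have hf : ∀ u ∈ BK T, f u = 0 := fun u hu =>
        (Submodule.mem_dualAnnihilator f).1 hfann u hu
      obtain ⟨π, hπ⟩ := exists_potential T h f hf
      have hrepr : (x - y : R × C → ℝ) =
          ∑ e : R × C, (x - y) e • (Pi.single e (1:ℝ) : R × C → ℝ) := by
        conv_lhs => rw [← Finset.univ_sum_single (x - y)]
        refine Finset.sum_congr rfl fun e _ => ?_
        rw [← Pi.single_smul, smul_eq_mul, mul_one]
      rw [hrepr, map_sum]
      simp only [map_smul, smul_eq_mul]
      have hterm : ∀ e : R × C, (x - y) e * f (Pi.single e 1) =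
          (x - y) e * π (Sum.inr e.2) - (x - y) e * π (Sum.inl e.1) := by
        intro e
        by_cases he : e ∈ T.sup
        · rw [hπ e he]; ring
        · rw [Pi.sub_apply, hz0 e he]; ring
      rw [Finset.sum_congr rfl (fun e _ => hterm e), Finset.sum_sub_distrib]
      have hA : ∑ e : R × C, (x - y) e * π (Sum.inr e.2) = 0 := by
        rw [Fintype.sum_prod_type, Finset.sum_comm]
        refine Finset.sum_eq_zero fun j _ => ?_
        show (∑ i : R, (x - y) (i, j) * π (Sum.inr j)) = 0
        rw [← Finset.sum_mul, hzc j, zero_mul]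
      have hB : ∑ e : R × C, (x - y) e * π (Sum.inl e.1) = 0 := by
        rw [Fintype.sum_prod_type]
        refine Finset.sum_eq_zero fun i _ => ?_
        show (∑ j : C, (x - y) (i, j) * π (Sum.inl i)) = 0
        rw [← Finset.sum_mul, hzr i, zero_mul]
      rw [hA, hB, sub_self]
    exact Submodule.span_le.2 hsub
  · refine Submodule.span_mono ?_
    rintro v ⟨x, y, hx, hy, hv⟩
    exact ⟨x, y, ⟨hx.1, hx.2.2.1, hx.2.2.2⟩, ⟨hy.1, hy.2.2.1, hy.2.2.2⟩, hv⟩
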